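/- Let n ≥ 1, k ≥ 1, let A ∈ ℝ^{n×n} be exponentially stable in the sense that there exist constants C > 0 and ω > 0 such that ‖exp(tA)‖ ≤ C e^{−ωt} for all t ≥ 0, and let R : (ℝ^n)^k → ℝ be a multilinear map. Then for all z_1, …, z_k ∈ ℝ^n the function t ↦ R(exp(tA) z_1, …, exp(tA) z_k) is integrable on [0, ∞), and the multilinear map T defined by T(z_1, …, z_k) := −∫_0^∞ R(exp(tA) z_1, …, exp(tA) z_k) dt satisfies Σ_{i=1}^k T(z_1, …, z_{i−1}, A z_i, z_{i+1}, …, z_k) = R(z_1, …, z_k) for all z_1, …, z_k ∈ ℝ^n. -/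

import Mathlib

open Matrix NormedSpace MeasureTheory

attribute [local instance] Matrix.linftyOpNormedAddCommGroup Matrix.linftyOpNormedSpace
  Matrix.linftyOpNormedRing Matrix.linftyOpNormedAlgebra

/-- Explicit integral solution of the generalized Lyapunov equation of order `k`:
for exponentially stable `A`, `t ↦ R(exp(tA)z_1,…,exp(tA)z_k)` is integrable on `[0,∞)`
and `T(z) := −∫_0^∞ R(exp(tA)z_1,…,exp(tA)z_k) dt` satisfies
`Σ_i T(z_1,…,Az_i,…,z_k) = R(z_1,…,z_k)`. -/
theorem generalized_lyapunov_integral_solution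
    (n k : ℕ) (hn : 1 ≤ n) (hk : 1 ≤ k)
    (A : Matrix (Fin n) (Fin n) ℝ)
    (hstab : ∃ C > (0 : ℝ), ∃ ω > (0 : ℝ), ∀ t : ℝ, 0 ≤ t →
      ‖exp (t • A)‖ ≤ C * Real.exp (-ω * t))
    (R : MultilinearMap ℝ (fun _ : Fin k => (Fin n → ℝ)) ℝ) :
    (∀ z : Fin k → (Fin n → ℝ),
      IntegrableOn (fun t : ℝ => R (fun i => exp (t • A) *ᵥ z i)) (Set.Ici 0)) ∧
    (∀ z : Fin k → (Fin n → ℝ),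
      ∑ i, (-∫ t in Set.Ici (0 : ℝ),
          R (fun j => exp (t • A) *ᵥ (Function.update z i (A *ᵥ z i) j)))
        = R z) := by
  classical
  obtain ⟨C, hC, ω, hω, hA⟩ := hstab
  -- a bound for the multilinear map R
  obtain ⟨B, hB0, hB⟩ : ∃ B ≥ (0:ℝ), ∀ m : Fin k → (Fin n → ℝ),
      ‖R m‖ ≤ B * ∏ i, ‖m i‖ := by
    refine ⟨∑ r : Fin k → Fin n, ‖R (fun i j' => if r i = j' then (1:ℝ) else 0)‖,
      Finset.sum_nonneg fun _ _ => norm_nonneg _, fun m => ?_⟩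
    have hm : m = fun i => ∑ j, m i j • (fun j' => if j = j' then (1:ℝ) else 0) := by
      funext i
      exact pi_eq_sum_univ (m i)
    calc ‖R m‖
        = ‖∑ r : Fin k → Fin n, (∏ i, m i (r i)) •
            R (fun i j' => if r i = j' then (1:ℝ) else 0)‖ := by
          conv_lhs => rw [hm]
          rw [R.map_sum]
          exact congrArg _ (Finset.sum_congr rfl fun r _ => R.map_smul_univ _ _)
      _ ≤ ∑ r : Fin k → Fin n, ‖(∏ i, m i (r i)) •
            R (fun i j' => if r i = j' then (1:ℝ) else 0)‖ := norm_sum_le _ _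
      _ ≤ ∑ r : Fin k → Fin n,
            ‖R (fun i j' => if r i = j' then (1:ℝ) else 0)‖ * ∏ i, ‖m i‖ := by
          refine Finset.sum_le_sum fun r _ => ?_
          rw [norm_smul, mul_comm]
          have h1 : ‖∏ i, m i (r i)‖ = ∏ i, ‖m i (r i)‖ := by
            simp only [Real.norm_eq_abs, Finset.abs_prod]
          have h2 : ∏ i, ‖m i (r i)‖ ≤ ∏ i, ‖m i‖ :=
            Finset.prod_le_prod (fun i _ => norm_nonneg _)
              (fun i _ => norm_le_pi_norm (m i) (r i))
          exact mul_le_mul_of_nonneg_left (h1.le.trans h2) (norm_nonneg _)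
      _ = (∑ r : Fin k → Fin n, ‖R (fun i j' => if r i = j' then (1:ℝ) else 0)‖) *
            ∏ i, ‖m i‖ := by rw [Finset.sum_mul]
  set Rc : ContinuousMultilinearMap ℝ (fun _ : Fin k => (Fin n → ℝ)) ℝ :=
    R.mkContinuous B hB with hRc
  have hRcR : ∀ m, Rc m = R m := fun m => rfl
  -- the continuous linear map `M ↦ M *ᵥ v`
  let L : (Fin n → ℝ) → Matrix (Fin n) (Fin n) ℝ →L[ℝ] (Fin n → ℝ) := fun v =>
    LinearMap.toContinuousLinearMap
      { toFun := fun M => M *ᵥ v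
        map_add' := fun M N => Matrix.add_mulVec M N v
        map_smul' := fun c M => Matrix.smul_mulVec c M v }
  have hL : ∀ v M, L v M = M *ᵥ v := fun v M => rfl
  have hexpc : Continuous fun t : ℝ => exp (t • A) :=
    exp_continuous.comp (continuous_id.smul continuous_const)
  -- continuity of the integrand
  have hf_cont : ∀ z : Fin k → (Fin n → ℝ),
      Continuous (fun t : ℝ => R (fun i => exp (t • A) *ᵥ z i)) := by
    intro z
    have : Continuous (fun t : ℝ => Rc (fun i => exp (t • A) *ᵥ z i)) :=
      Rc.cont.comp (continuous_pi fun i => ((L (z i)).continuous).comp hexpc)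
    simpa [hRcR] using this
  -- exponential bound on the integrand
  have hbound : ∀ z : Fin k → (Fin n → ℝ), ∀ t : ℝ, 0 ≤ t →
      ‖R (fun i => exp (t • A) *ᵥ z i)‖ ≤
        (B * C ^ k * ∏ i, ‖z i‖) * Real.exp (-ω * t) := by
    intro z t ht
    have hprodz : (0:ℝ) ≤ ∏ i, ‖z i‖ := Finset.prod_nonneg fun i _ => norm_nonneg _
    have he0 : (0:ℝ) < Real.exp (-ω * t) := Real.exp_pos _
    have he1 : Real.exp (-ω * t) ≤ 1 := by
      rw [Real.exp_le_one_iff]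
      nlinarith
    have hek : Real.exp (-ω * t) ^ k ≤ Real.exp (-ω * t) := by
      calc Real.exp (-ω * t) ^ k ≤ Real.exp (-ω * t) ^ 1 :=
          pow_le_pow_of_le_one he0.le he1 hk
        _ = Real.exp (-ω * t) := pow_one _
    calc ‖R (fun i => exp (t • A) *ᵥ z i)‖
        ≤ B * ∏ i, ‖exp (t • A) *ᵥ z i‖ := hB _
      _ ≤ B * ∏ i, (C * Real.exp (-ω * t) * ‖z i‖) := by
          refine mul_le_mul_of_nonneg_left ?_ hB0
          refine Finset.prod_le_prod (fun i _ => norm_nonneg _) fun i _ => ?_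
          calc ‖exp (t • A) *ᵥ z i‖ ≤ ‖exp (t • A)‖ * ‖z i‖ :=
              Matrix.linfty_opNorm_mulVec _ _
            _ ≤ C * Real.exp (-ω * t) * ‖z i‖ :=
              mul_le_mul_of_nonneg_right (hA t ht) (norm_nonneg _)
      _ = (B * C ^ k * ∏ i, ‖z i‖) * Real.exp (-ω * t) ^ k := by
          rw [Finset.prod_mul_distrib, Finset.prod_const, Finset.card_univ,
            Fintype.card_fin, mul_pow]
          ring
      _ ≤ (B * C ^ k * ∏ i, ‖z i‖) * Real.exp (-ω * t) := by
          refine mul_le_mul_of_nonneg_left hek ?_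
          have := pow_nonneg hC.le k
          positivity
  -- integrability
  have key : ∀ z : Fin k → (Fin n → ℝ),
      IntegrableOn (fun t : ℝ => R (fun i => exp (t • A) *ᵥ z i)) (Set.Ici 0) := by
    intro z
    have hg : IntegrableOn
        (fun t : ℝ => (B * C ^ k * ∏ i, ‖z i‖) * Real.exp (-ω * t)) (Set.Ici 0) := by
      rw [integrableOn_Ici_iff_integrableOn_Ioi]
      exact (exp_neg_integrableOn_Ioi 0 hω).const_mul _
    refine hg.mono' ((hf_cont z).aestronglyMeasurable.restrict) ?_
    filter_upwards [ae_restrict_mem measurableSet_Ici] with t ht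
    exact hbound z t ht
  refine ⟨key, fun z => ?_⟩
  -- derivative of the integrand
  have hderiv : ∀ t : ℝ,
      HasDerivAt (fun t : ℝ => R (fun i => exp (t • A) *ᵥ z i))
        (∑ i, R (fun j => exp (t • A) *ᵥ (Function.update z i (A *ᵥ z i) j))) t := by
    intro t
    have hg : HasDerivAt (fun t : ℝ => (fun i => exp (t • A) *ᵥ z i))
        (fun i => exp (t • A) *ᵥ (A *ᵥ z i)) t := by
      rw [hasDerivAt_pi]
      intro i
      have h1 := (L (z i)).hasFDerivAt.comp_hasDerivAt t (hasDerivAt_exp_smul_const A t)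
      have h2 : (L (z i)) (exp (t • A) * A) = exp (t • A) *ᵥ (A *ᵥ z i) := by
        rw [hL, Matrix.mulVec_mulVec]
      replace h1 := h1.congr_deriv h2
      exact h1
    have h2 := (Rc.hasFDerivAt (fun i => exp (t • A) *ᵥ z i)).comp_hasDerivAt t hg
    have h3 : (Rc.linearDeriv (fun i => exp (t • A) *ᵥ z i))
          (fun i => exp (t • A) *ᵥ (A *ᵥ z i))
        = ∑ i, R (fun j => exp (t • A) *ᵥ (Function.update z i (A *ᵥ z i) j)) := by
      rw [ContinuousMultilinearMap.linearDeriv_apply]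
      refine Finset.sum_congr rfl fun i _ => ?_
      rw [hRcR]
      congr 1
      funext j
      rcases eq_or_ne j i with rfl | hj
      · rw [Function.update_self, Function.update_self]
      · rw [Function.update_of_ne hj, Function.update_of_ne hj]
    rw [h3] at h2
    exact h2
  -- the integrand tends to 0 at infinity
  have hlim : Filter.Tendsto (fun t : ℝ => R (fun i => exp (t • A) *ᵥ z i))
      Filter.atTop (nhds 0) := by
    have hexp0 : Filter.Tendsto (fun t : ℝ => Real.exp (-ω * t)) Filter.atTop (nhds 0) := by
      refine Real.tendsto_exp_atBot.comp ?_
      exact (Filter.tendsto_const_mul_atBot_of_neg (neg_lt_zero.mpr hω)).mpr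
        Filter.tendsto_id
    have hM : Filter.Tendsto
        (fun t : ℝ => (B * C ^ k * ∏ i, ‖z i‖) * Real.exp (-ω * t))
        Filter.atTop (nhds 0) := by
      simpa using hexp0.const_mul (B * C ^ k * ∏ i, ‖z i‖)
    refine squeeze_zero_norm' ?_ hM
    filter_upwards [Filter.eventually_ge_atTop (0:ℝ)] with t ht
    exact hbound z t ht
  -- FTC on [0, ∞)
  have hint : ∀ i : Fin k, IntegrableOn
      (fun t : ℝ => R (fun j => exp (t • A) *ᵥ (Function.update z i (A *ᵥ z i) j)))
      (Set.Ioi 0) :=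
    fun i => (key _).mono_set Set.Ioi_subset_Ici_self
  have hFTC : (∫ t in Set.Ioi (0:ℝ),
        ∑ i, R (fun j => exp (t • A) *ᵥ (Function.update z i (A *ᵥ z i) j)))
      = 0 - R (fun i => exp ((0:ℝ) • A) *ᵥ z i) := by
    refine integral_Ioi_of_hasDerivAt_of_tendsto
      ((hf_cont z).continuousWithinAt) (fun x _ => hderiv x) ?_ hlim
    exact integrable_finset_sum _ fun i _ => hint i
  have h0 : R (fun i => exp ((0:ℝ) • A) *ᵥ z i) = R z := by
    have : ∀ i, exp ((0:ℝ) • A) *ᵥ z i = z i := by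
      intro i
      rw [zero_smul, exp_zero, Matrix.one_mulVec]
    simp only [this]
  calc ∑ i, (-∫ t in Set.Ici (0:ℝ),
        R (fun j => exp (t • A) *ᵥ (Function.update z i (A *ᵥ z i) j)))
      = ∑ i, (-∫ t in Set.Ioi (0:ℝ),
        R (fun j => exp (t • A) *ᵥ (Function.update z i (A *ᵥ z i) j))) := by
        refine Finset.sum_congr rfl fun i _ => ?_
        rw [integral_Ici_eq_integral_Ioi]
    _ = -∑ i, ∫ t in Set.Ioi (0:ℝ),
        R (fun j => exp (t • A) *ᵥ (Function.update z i (A *ᵥ z i) j)) := by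
        rw [Finset.sum_neg_distrib]
    _ = -∫ t in Set.Ioi (0:ℝ),
        ∑ i, R (fun j => exp (t • A) *ᵥ (Function.update z i (A *ᵥ z i) j)) := by
        rw [integral_finset_sum _ fun i _ => hint i]
    _ = R z := by rw [hFTC, h0]; ring
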